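/- Let (N,w) be a game with w crossing supermodular and s ∈ N. Define u(S) := w(N\S) − w(N) for S ⊆ N\{s}, and let w̄, ū denote the superadditive covers of w and u restricted to subsets of N\{s}. Then Core(w) ≠ ∅ if and only if −w̄(S) − ū(S) ≥ 0 for all S ⊆ N\{s}. -/

import Mathlib

open Finset

/-- `Ps` is a proper partition of `S`: a family of pairwise disjoint nonempty sets
whose union is `S`. -/
def IsProperPartition {α : Type*} [DecidableEq α] (Ps : Finset (Finset α)) (S : Finset α) : Prop :=
  (∀ P ∈ Ps, P.Nonempty) ∧ (∀ P ∈ Ps, ∀ Q ∈ Ps, P ≠ Q → Disjoint P Q) ∧ Ps.biUnion id = S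

/-- `vbar` is the superadditive cover of `v` restricted to subsets of `D`. -/
def IsSupaddCoverOn {α : Type*} [DecidableEq α] (v vbar : Finset α → ℝ) (D : Finset α) : Prop :=
  vbar ∅ = 0 ∧ ∀ S : Finset α, S ⊆ D → S.Nonempty →
    (∃ Ps, IsProperPartition Ps S ∧ vbar S = ∑ P ∈ Ps, v P) ∧
    (∀ Ps, IsProperPartition Ps S → ∑ P ∈ Ps, v P ≤ vbar S)

namespace CoreAux
set_option linter.unusedSectionVars false

variable {α : Type*} [DecidableEq α]

/-- coverage count of a point by a multiset of finsets -/
def cov (M : Multiset (Finset α)) (x : α) : ℕ :=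
  Multiset.card (M.filter (fun P => x ∈ P))

def wsum (w : Finset α → ℝ) (M : Multiset (Finset α)) : ℝ := (M.map w).sum

def Phi (M : Multiset (Finset α)) : ℕ := (M.map (fun P => P.card ^ 2)).sum

def Lam (M : Multiset (Finset α)) : Prop :=
  ∀ P ∈ M, ∀ Q ∈ M, P ⊆ Q ∨ Q ⊆ P ∨ P ∩ Q = ∅

@[simp] lemma cov_zero (x : α) : cov (0 : Multiset (Finset α)) x = 0 := rfl

lemma cov_cons (P : Finset α) (M : Multiset (Finset α)) (x : α) :
    cov (P ::ₘ M) x = (if x ∈ P then 1 else 0) + cov M x := by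
  simp [cov, Multiset.filter_cons]
  split <;> simp

lemma cov_add (M N : Multiset (Finset α)) (x : α) :
    cov (M + N) x = cov M x + cov N x := by
  simp [cov, Multiset.filter_add]

lemma wsum_cons (w : Finset α → ℝ) (P : Finset α) (M : Multiset (Finset α)) :
    wsum w (P ::ₘ M) = w P + wsum w M := by simp [wsum]

lemma wsum_add (w : Finset α → ℝ) (M N : Multiset (Finset α)) :
    wsum w (M + N) = wsum w M + wsum w N := by simp [wsum]

lemma Phi_cons (P : Finset α) (M : Multiset (Finset α)) :
    Phi (P ::ₘ M) = P.card ^ 2 + Phi M := by simp [Phi]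

lemma count_le_cov {M : Multiset (Finset α)} {P : Finset α} {x : α} (hx : x ∈ P) :
    M.count P ≤ cov M x := by
  have : M.count P = (M.filter (fun Q => x ∈ Q)).count P := by
    rw [Multiset.count_filter, if_pos hx]
  rw [this]
  exact Multiset.count_le_card _ _

lemma counts_le_cov {M : Multiset (Finset α)} {s : Finset (Finset α)} {x : α}
    (hs : ∀ P ∈ s, x ∈ P) : ∑ P ∈ s, M.count P ≤ cov M x := by
  classical
  set F := M.filter (fun Q => x ∈ Q) with hF
  have h1 : ∀ P ∈ s, M.count P = F.count P := by
    intro P hP; rw [hF, Multiset.count_filter, if_pos (hs P hP)]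
  rw [Finset.sum_congr rfl h1]
  have h2 : ∑ P ∈ s, F.count P ≤ ∑ P ∈ s ∪ F.toFinset, F.count P :=
    Finset.sum_le_sum_of_subset Finset.subset_union_left
  have h3 : ∑ P ∈ F.toFinset, F.count P = ∑ P ∈ s ∪ F.toFinset, F.count P := by
    apply Finset.sum_subset Finset.subset_union_right
    intro P _ hP
    simpa [Multiset.count_eq_zero] using fun h => hP (Multiset.mem_toFinset.2 h)
  calc ∑ P ∈ s, F.count P ≤ ∑ P ∈ s ∪ F.toFinset, F.count P := h2
    _ = Multiset.card F := h3 ▸ Multiset.toFinset_sum_count_eq F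
    _ = cov M x := rfl

lemma pair_counts_le_cov {M : Multiset (Finset α)} {X Y : Finset α} {x : α}
    (h : X ≠ Y) (hx : x ∈ X) (hy : x ∈ Y) : M.count X + M.count Y ≤ cov M x := by
  have hm : ∀ P ∈ ({X, Y} : Finset (Finset α)), x ∈ P := by
    intro P hP
    rcases Finset.mem_insert.1 hP with h' | h'
    · exact h' ▸ hx
    · exact (Finset.mem_singleton.1 h') ▸ hy
  have := counts_le_cov (M := M) hm
  rwa [Finset.sum_pair h] at this

lemma triple_counts_le_cov {M : Multiset (Finset α)} {X Y Z : Finset α} {x : α}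
    (hxy : X ≠ Y) (hxz : X ≠ Z) (hyz : Y ≠ Z) (h1 : x ∈ X) (h2 : x ∈ Y) (h3 : x ∈ Z) :
    M.count X + (M.count Y + M.count Z) ≤ cov M x := by
  have hm : ∀ P ∈ insert X ({Y, Z} : Finset (Finset α)), x ∈ P := by
    intro P hP
    rcases Finset.mem_insert.1 hP with h' | h'
    · exact h' ▸ h1
    rcases Finset.mem_insert.1 h' with h' | h'
    · exact h' ▸ h2
    · exact (Finset.mem_singleton.1 h') ▸ h3
  have := counts_le_cov (M := M) hm
  rwa [Finset.sum_insert (by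
      simp only [Finset.mem_insert, Finset.mem_singleton, not_or]
      exact ⟨hxy, hxz⟩), Finset.sum_pair hyz] at this

lemma cov_pos_iff {M : Multiset (Finset α)} {x : α} :
    0 < cov M x ↔ ∃ P ∈ M, x ∈ P := by
  simp [cov, Multiset.card_pos_iff_exists_mem, Multiset.mem_filter]

/-- coverage of a proper partition is the indicator of its union -/
lemma cov_partition' {Ps : Finset (Finset α)} {S : Finset α}
    (hdisj : ∀ P ∈ Ps, ∀ Q ∈ Ps, P ≠ Q → Disjoint P Q) (hun : Ps.biUnion id = S) (x : α) :
    cov Ps.val x = if x ∈ S then 1 else 0 := by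
  by_cases hx : x ∈ S
  · rw [if_pos hx]
    rw [← hun] at hx
    obtain ⟨P0, hP0, hxP0⟩ := Finset.mem_biUnion.1 hx
    have hfe : Ps.filter (fun P => x ∈ P) = {P0} := by
      apply Finset.eq_singleton_iff_unique_mem.2
      constructor
      · exact Finset.mem_filter.2 ⟨hP0, hxP0⟩
      · intro Q hQ
        rw [Finset.mem_filter] at hQ
        by_contra hne'
        exact (Finset.disjoint_left.1 (hdisj _ hQ.1 _ hP0 hne') hQ.2) hxP0
    show (Ps.filter (fun P => x ∈ P)).card = 1
    rw [hfe, Finset.card_singleton]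
  · rw [if_neg hx]
    rw [cov, Multiset.card_eq_zero, Multiset.filter_eq_nil]
    intro Q hQ hxQ
    exact hx (hun ▸ Finset.mem_biUnion.2 ⟨Q, hQ, hxQ⟩)


lemma card_sum_eq {D : Finset α} {M : Multiset (Finset α)} (hM : ∀ P ∈ M, P ⊆ D) :
    (M.map Finset.card).sum = ∑ x ∈ D, cov M x := by
  induction M using Multiset.induction with
  | empty => simp
  | cons P M ih =>
    have hP : P ⊆ D := hM P (Multiset.mem_cons_self _ _)
    have ih' := ih (fun Q hQ => hM Q (Multiset.mem_cons_of_mem hQ))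
    simp only [Multiset.map_cons, Multiset.sum_cons, ih', cov_cons, Finset.sum_add_distrib]
    congr 1
    rw [Finset.sum_ite_mem, Finset.inter_eq_right.2 hP, Finset.sum_const, smul_eq_mul, mul_one]

lemma Phi_le {D : Finset α} {M : Multiset (Finset α)} (hM : ∀ P ∈ M, P ⊆ D)
    (hcov : ∀ x, cov M x ≤ 2) : Phi M ≤ 2 * D.card * D.card := by
  have h1 : Phi M ≤ D.card * (M.map Finset.card).sum := by
    rw [Phi, ← Multiset.sum_map_mul_left]
    apply Multiset.sum_map_le_sum_map
    intro P hP
    have : P.card ≤ D.card := Finset.card_le_card (hM P hP)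
    nlinarith
  have h2 : (M.map Finset.card).sum ≤ 2 * D.card := by
    rw [card_sum_eq hM]
    calc ∑ x ∈ D, cov M x ≤ ∑ _x ∈ D, 2 := Finset.sum_le_sum (fun x _ => hcov x)
      _ = 2 * D.card := by rw [Finset.sum_const, smul_eq_mul, mul_comm]
  calc Phi M ≤ D.card * (M.map Finset.card).sum := h1
    _ ≤ D.card * (2 * D.card) := Nat.mul_le_mul_left _ h2
    _ = 2 * D.card * D.card := by ring

lemma uncross {D : Finset α} {w : Finset α → ℝ}
    (hw : ∀ P Q : Finset α, P ⊆ D → Q ⊆ D → (P ∩ Q).Nonempty →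
      w P + w Q ≤ w (P ∩ Q) + w (P ∪ Q)) :
    ∀ (n : ℕ) (M : Multiset (Finset α)), (∀ P ∈ M, P.Nonempty ∧ P ⊆ D) →
    (∀ x, cov M x ≤ 2) → 2 * D.card * D.card + 1 ≤ n + Phi M →
    ∃ M', Lam M' ∧ (∀ P ∈ M', P.Nonempty ∧ P ⊆ D) ∧ (∀ x, cov M' x = cov M x) ∧
      wsum w M ≤ wsum w M' := by
  intro n
  induction n with
  | zero =>
    intro M hparts hcov hmeas
    exact absurd hmeas (by simpa using Nat.lt_succ_of_le (Phi_le (fun P hP => (hparts P hP).2) hcov))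
  | succ n ih =>
    intro M hparts hcov hmeas
    by_cases hlam : Lam M
    · exact ⟨M, hlam, hparts, fun _ => rfl, le_refl _⟩
    · simp only [Lam, not_forall] at hlam
      obtain ⟨P, hP, Q, hQ, hcr⟩ := hlam
      push_neg at hcr
      obtain ⟨hPQ, hQP, hint⟩ := hcr
      have hne : P ≠ Q := fun h => hPQ (h ▸ Finset.Subset.refl _)
      have hQ' : Q ∈ M.erase P := (Multiset.mem_erase_of_ne hne.symm).2 hQ
      set R : Multiset (Finset α) := (M.erase P).erase Q with hR
      have hMeq : M = P ::ₘ Q ::ₘ R := by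
        rw [hR, Multiset.cons_erase hQ', Multiset.cons_erase hP]
      set M'' : Multiset (Finset α) := (P ∪ Q) ::ₘ (P ∩ Q) ::ₘ R with hM''
      have hPD := (hparts P hP).2
      have hQD := (hparts Q hQ).2
      have hiNe : (P ∩ Q).Nonempty := hint
      -- parts
      have hparts'' : ∀ T ∈ M'', T.Nonempty ∧ T ⊆ D := by
        intro T hT
        rw [hM''] at hT
        rcases Multiset.mem_cons.1 hT with h | hT
        · exact ⟨h ▸ ((hparts P hP).1.mono Finset.subset_union_left), h ▸ Finset.union_subset hPD hQD⟩
        rcases Multiset.mem_cons.1 hT with h | hT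
        · exact ⟨h ▸ hiNe, h ▸ (Finset.inter_subset_left.trans hPD)⟩
        · exact hparts T (hMeq ▸ Multiset.mem_cons_of_mem (Multiset.mem_cons_of_mem hT))
      -- coverage
      have hcov'' : ∀ x, cov M'' x = cov M x := by
        intro x
        rw [hMeq, hM'', cov_cons, cov_cons, cov_cons, cov_cons]
        by_cases h1 : x ∈ P <;> by_cases h2 : x ∈ Q <;>
          simp [Finset.mem_union, Finset.mem_inter, h1, h2]
      -- wsum
      have hws : wsum w M ≤ wsum w M'' := by
        rw [hMeq, hM'', wsum_cons, wsum_cons, wsum_cons, wsum_cons]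
        have := hw P Q hPD hQD hiNe
        linarith
      -- Phi increases
      have hPhi : Phi M + 1 ≤ Phi M'' := by
        rw [hMeq, hM'', Phi_cons, Phi_cons, Phi_cons, Phi_cons]
        have hcu : P.card + 1 ≤ (P ∪ Q).card := by
          obtain ⟨y, hyQ, hyP⟩ := Finset.not_subset.1 hQP
          have : insert y P ⊆ P ∪ Q := by
            intro z hz
            rcases Finset.mem_insert.1 hz with h | h
            · exact Finset.mem_union_right _ (h ▸ hyQ)
            · exact Finset.mem_union_left _ h
          calc P.card + 1 = (insert y P).card := (Finset.card_insert_of_notMem hyP).symm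
            _ ≤ (P ∪ Q).card := Finset.card_le_card this
        have hcu' : Q.card + 1 ≤ (P ∪ Q).card := by
          obtain ⟨y, hyP, hyQ⟩ := Finset.not_subset.1 hPQ
          have : insert y Q ⊆ P ∪ Q := by
            intro z hz
            rcases Finset.mem_insert.1 hz with h | h
            · exact Finset.mem_union_left _ (h ▸ hyP)
            · exact Finset.mem_union_right _ h
          calc Q.card + 1 = (insert y Q).card := (Finset.card_insert_of_notMem hyQ).symm
            _ ≤ (P ∪ Q).card := Finset.card_le_card this
        have hsum : (P ∪ Q).card + (P ∩ Q).card = P.card + Q.card :=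
          Finset.card_union_add_card_inter P Q
        nlinarith [hsum, hcu, hcu']
      have hmeas'' : 2 * D.card * D.card + 1 ≤ n + Phi M'' := by omega
      obtain ⟨M', h1, h2, h3, h4⟩ := ih M'' hparts'' (fun x => (hcov'' x) ▸ hcov x) hmeas''
      exact ⟨M', h1, h2, fun x => (h3 x).trans (hcov'' x), hws.trans h4⟩

lemma laminar_split {D A B : Finset α} {w wbar : Finset α → ℝ}
    (hwbar : IsSupaddCoverOn w wbar D) (hA : A ⊆ D) (hB : B ⊆ D)
    (M : Multiset (Finset α)) (hLam : Lam M)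
    (hparts : ∀ P ∈ M, P.Nonempty ∧ P ⊆ D)
    (hcov : ∀ x, cov M x = (if x ∈ A then 1 else 0) + (if x ∈ B then 1 else 0)) :
    wsum w M ≤ wbar (A ∪ B) + wbar (A ∩ B) := by
  classical
  have hcov2 : ∀ x, cov M x ≤ 2 := by intro x; rw [hcov]; split <;> split <;> omega
  have hmemAB : ∀ x, (∃ P ∈ M, x ∈ P) → x ∈ A ∪ B := by
    intro x hx
    have := cov_pos_iff.2 hx
    rw [hcov] at this
    by_contra h
    rw [Finset.mem_union] at h
    push_neg at h
    simp [h.1, h.2] at this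
  have hmemAB2 : ∀ x, 2 ≤ cov M x → x ∈ A ∩ B := by
    intro x hx
    rw [hcov] at hx
    rw [Finset.mem_inter]
    constructor
    · by_contra h
      rw [if_neg h] at hx
      split at hx <;> omega
    · by_contra h
      rw [if_neg h] at hx
      split at hx <;> omega
  set T : Finset (Finset α) := M.toFinset.filter (fun P => ∀ Q ∈ M, P ⊆ Q → P = Q) with hT
  have hTmem : ∀ P ∈ T, P ∈ M := fun P hP => Multiset.mem_toFinset.1 (Finset.mem_filter.1 hP).1
  have hTmax : ∀ P ∈ T, ∀ Q ∈ M, P ⊆ Q → P = Q := fun P hP => (Finset.mem_filter.1 hP).2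
  have hexmax : ∀ P ∈ M, ∃ Pm ∈ T, P ⊆ Pm := by
    intro P hP
    have hSne : (M.toFinset.filter (fun Q => P ⊆ Q)).Nonempty :=
      ⟨P, Finset.mem_filter.2 ⟨Multiset.mem_toFinset.2 hP, Finset.Subset.refl _⟩⟩
    obtain ⟨m, hmM⟩ := Finset.exists_maximal hSne
    have hm : m ∈ M.toFinset.filter (fun Q => P ⊆ Q) := hmM.1
    rw [Finset.mem_filter] at hm
    refine ⟨m, Finset.mem_filter.2 ⟨hm.1, ?_⟩, hm.2⟩
    intro Q hQ hmQ
    by_contra hne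
    exact hne (le_antisymm hmQ
      (hmM.2 (Finset.mem_filter.2 ⟨Multiset.mem_toFinset.2 hQ, hm.2.trans hmQ⟩) hmQ))
  have hTdisj : ∀ P ∈ T, ∀ Q ∈ T, P ≠ Q → Disjoint P Q := by
    intro P hP Q hQ hne
    rcases hLam P (hTmem P hP) Q (hTmem Q hQ) with h | h | h
    · exact absurd (hTmax P hP Q (hTmem Q hQ) h) hne
    · exact absurd (hTmax Q hQ P (hTmem P hP) h).symm hne
    · exact Finset.disjoint_iff_inter_eq_empty.2 h
  have hTle : T.val ≤ M := by
    rw [Multiset.le_iff_count]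
    intro P
    by_cases hP : P ∈ T
    · rw [Multiset.count_eq_one_of_mem T.nodup hP]
      exact Multiset.one_le_count_iff_mem.2 (hTmem P hP)
    · rw [Multiset.count_eq_zero.2 (fun h => hP (Finset.mem_def.2 h))]
      exact Nat.zero_le _
  set rest : Multiset (Finset α) := M - T.val with hrest
  have hMsplit : T.val + rest = M := add_tsub_cancel_of_le hTle
  have hrestle : rest ≤ M := tsub_le_self
  have hcovsplit : ∀ x, cov T.val x + cov rest x = cov M x := by
    intro x; rw [← cov_add, hMsplit]
  have hcountsplit : ∀ P, T.val.count P + rest.count P = M.count P := by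
    intro P; rw [← Multiset.count_add, hMsplit]
  have hTun : T.biUnion id = A ∪ B := by
    apply Finset.Subset.antisymm
    · intro x hx
      obtain ⟨P, hP, hxP⟩ := Finset.mem_biUnion.1 hx
      exact hmemAB x ⟨P, hTmem P hP, hxP⟩
    · intro x hx
      have : 0 < cov M x := by
        rw [hcov]
        rcases Finset.mem_union.1 hx with h | h <;> simp [h] <;> omega
      obtain ⟨P, hP, hxP⟩ := cov_pos_iff.1 this
      obtain ⟨Pm, hPm, hPPm⟩ := hexmax P hP
      exact Finset.mem_biUnion.2 ⟨Pm, hPm, hPPm hxP⟩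
  have hcovT : ∀ x, cov T.val x = if x ∈ A ∪ B then 1 else 0 := cov_partition' hTdisj hTun
  -- key counting bound
  have hkey : ∀ R ∈ rest, ∀ x ∈ R, ∀ R' ∈ rest, x ∈ R' → R = R' ∧ rest.count R ≤ 1 := by
    intro R hR x hxR R' hR' hxR'
    have hRM : R ∈ M := Multiset.mem_of_le hrestle hR
    obtain ⟨Pm, hPm, hRPm⟩ := hexmax R hRM
    have hxPm : x ∈ Pm := hRPm hxR
    have hcPm : 1 ≤ T.val.count Pm := Multiset.one_le_count_iff_mem.2 (Finset.mem_def.1 hPm)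
    have hcR : 1 ≤ rest.count R := Multiset.one_le_count_iff_mem.2 hR
    have hcR' : 1 ≤ rest.count R' := Multiset.one_le_count_iff_mem.2 hR'
    constructor
    · by_contra hne
      -- three covering copies
      have h3 : 3 ≤ cov M x := by
        by_cases h1 : Pm = R
        · by_cases h2 : Pm = R'
          · exact absurd (h1 ▸ h2 : R = R') hne
          · have hle : M.count Pm + M.count R' ≤ cov M x := pair_counts_le_cov h2 hxPm hxR'
            have e1 : 2 ≤ M.count Pm := by
              rw [← hcountsplit]; have := h1 ▸ hcR; omega
            have e2 : 1 ≤ M.count R' := by rw [← hcountsplit]; omega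
            omega
        · by_cases h2 : Pm = R'
          · have hle : M.count Pm + M.count R ≤ cov M x := pair_counts_le_cov h1 hxPm hxR
            have e1 : 2 ≤ M.count Pm := by
              rw [← hcountsplit]; have := h2 ▸ hcR'; omega
            have e2 : 1 ≤ M.count R := by rw [← hcountsplit]; omega
            omega
          · -- all three distinct
            have hRR' : R ≠ R' := hne
            have hsum : M.count Pm + (M.count R + M.count R') ≤ cov M x :=
              triple_counts_le_cov h1 h2 hRR' hxPm hxR hxR'
            have e1 : 1 ≤ M.count Pm := by rw [← hcountsplit]; omega
            have e2 : 1 ≤ M.count R := by rw [← hcountsplit]; omega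
            have e3 : 1 ≤ M.count R' := by rw [← hcountsplit]; omega
            omega
      exact absurd h3 (by have := hcov2 x; omega)
    · by_contra hc
      push_neg at hc
      have h3 : 3 ≤ cov M x := by
        by_cases h1 : Pm = R
        · have : 3 ≤ M.count R := by rw [← hcountsplit]; have := h1 ▸ hcPm; omega
          exact le_trans this (count_le_cov hxR)
        · have hle : M.count Pm + M.count R ≤ cov M x := pair_counts_le_cov h1 hxPm hxR
          have e2 : 2 ≤ M.count R := by rw [← hcountsplit]; omega
          have e1 : 1 ≤ M.count Pm := by rw [← hcountsplit]; omega
          omega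
      exact absurd h3 (by have := hcov2 x; omega)
  have hrestnodup : rest.Nodup := by
    rw [Multiset.nodup_iff_count_le_one]
    intro R
    by_cases hR : R ∈ rest
    · have hRM : R ∈ M := Multiset.mem_of_le hrestle hR
      obtain ⟨x, hx⟩ := (hparts R hRM).1
      exact (hkey R hR x hx R hR hx).2
    · rw [Multiset.count_eq_zero.2 hR]; omega
  have hrestsub : ∀ R ∈ rest, R ⊆ A ∩ B := by
    intro R hR x hxR
    have hRM : R ∈ M := Multiset.mem_of_le hrestle hR
    obtain ⟨Pm, hPm, hRPm⟩ := hexmax R hRM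
    have hxPm : x ∈ Pm := hRPm hxR
    apply hmemAB2
    by_cases h1 : Pm = R
    · have : 2 ≤ M.count R := by
        rw [← hcountsplit]
        have := Multiset.one_le_count_iff_mem.2 (h1 ▸ Finset.mem_def.1 hPm)
        have := Multiset.one_le_count_iff_mem.2 hR
        omega
      exact le_trans this (count_le_cov hxR)
    · have hle : M.count Pm + M.count R ≤ cov M x := pair_counts_le_cov h1 hxPm hxR
      have e1 : 1 ≤ M.count Pm := by
        rw [← hcountsplit]
        have := Multiset.one_le_count_iff_mem.2 (Finset.mem_def.1 hPm); omega
      have e2 : 1 ≤ M.count R := by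
        rw [← hcountsplit]
        have := Multiset.one_le_count_iff_mem.2 hR; omega
      omega
  set Rs : Finset (Finset α) := ⟨rest, hrestnodup⟩ with hRs
  have hRsun : Rs.biUnion id = A ∩ B := by
    apply Finset.Subset.antisymm
    · intro x hx
      obtain ⟨R, hR, hxR⟩ := Finset.mem_biUnion.1 hx
      exact hrestsub R hR hxR
    · intro x hx
      have hx2 : cov M x = 2 := by
        rw [hcov]
        rw [Finset.mem_inter] at hx
        simp [hx.1, hx.2]
      have hxu : x ∈ A ∪ B := Finset.mem_union_left _ (Finset.mem_inter.1 hx).1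
      have : cov rest x = 1 := by
        have := hcovsplit x
        rw [hcovT x, if_pos hxu, hx2] at this
        omega
      obtain ⟨R, hR, hxR⟩ := cov_pos_iff.1 (by omega : 0 < cov rest x)
      exact Finset.mem_biUnion.2 ⟨R, hR, hxR⟩
  have hRsdisj : ∀ P ∈ Rs, ∀ Q ∈ Rs, P ≠ Q → Disjoint P Q := by
    intro P hP Q hQ hne
    rw [Finset.disjoint_left]
    intro x hxP hxQ
    exact hne (hkey P hP x hxP Q hQ hxQ).1
  -- split the sum
  have hsumsplit : wsum w M = ∑ P ∈ T, w P + ∑ R ∈ Rs, w R := by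
    rw [← hMsplit, wsum_add]
    rfl
  rw [hsumsplit]
  have hTbound : ∑ P ∈ T, w P ≤ wbar (A ∪ B) := by
    by_cases hABne : (A ∪ B).Nonempty
    · exact (hwbar.2 (A ∪ B) (Finset.union_subset hA hB) hABne).2 T
        ⟨fun P hP => (hparts P (hTmem P hP)).1, hTdisj, hTun⟩
    · have hABe : A ∪ B = ∅ := Finset.not_nonempty_iff_eq_empty.1 hABne
      have hTe : T = ∅ := by
        rw [Finset.eq_empty_iff_forall_notMem]
        intro P hP
        obtain ⟨x, hx⟩ := (hparts P (hTmem P hP)).1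
        have := hmemAB x ⟨P, hTmem P hP, hx⟩
        rw [hABe] at this
        exact absurd this (Finset.notMem_empty x)
      rw [hTe, hABe, Finset.sum_empty, hwbar.1]
  have hRbound : ∑ R ∈ Rs, w R ≤ wbar (A ∩ B) := by
    by_cases hABne : (A ∩ B).Nonempty
    · exact (hwbar.2 (A ∩ B) ((Finset.inter_subset_left).trans hA) hABne).2 Rs
        ⟨fun R hR => (hparts R (Multiset.mem_of_le hrestle hR)).1, hRsdisj, hRsun⟩
    · have hABe : A ∩ B = ∅ := Finset.not_nonempty_iff_eq_empty.1 hABne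
      have hRse : Rs = ∅ := by
        rw [Finset.eq_empty_iff_forall_notMem]
        intro R hR
        obtain ⟨x, hx⟩ := (hparts R (Multiset.mem_of_le hrestle hR)).1
        have := hrestsub R hR hx
        rw [hABe] at this
        exact absurd this (Finset.notMem_empty x)
      rw [hRse, hABe, Finset.sum_empty, hwbar.1]
  linarith

lemma cover_supermodular {D : Finset α} {w wbar : Finset α → ℝ}
    (hw : ∀ P Q : Finset α, P ⊆ D → Q ⊆ D → (P ∩ Q).Nonempty →
      w P + w Q ≤ w (P ∩ Q) + w (P ∪ Q))
    (hwbar : IsSupaddCoverOn w wbar D) :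
    ∀ A B : Finset α, A ⊆ D → B ⊆ D → wbar A + wbar B ≤ wbar (A ∩ B) + wbar (A ∪ B) := by
  intro A B hA hB
  rcases Finset.eq_empty_or_nonempty A with hAe | hAne
  · rw [hAe, Finset.empty_inter, Finset.empty_union, hwbar.1]
  rcases Finset.eq_empty_or_nonempty B with hBe | hBne
  · rw [hBe, Finset.inter_empty, Finset.union_empty, hwbar.1]
    linarith [le_refl (wbar A)]
  obtain ⟨⟨Ps, hPs, hPsval⟩, _⟩ := hwbar.2 A hA hAne
  obtain ⟨⟨Qs, hQs, hQsval⟩, _⟩ := hwbar.2 B hB hBne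
  set M0 : Multiset (Finset α) := Ps.val + Qs.val with hM0
  have hparts : ∀ P ∈ M0, P.Nonempty ∧ P ⊆ D := by
    intro P hP
    rcases Multiset.mem_add.1 hP with h | h
    · refine ⟨hPs.1 P h, ?_⟩
      have := Finset.subset_biUnion_of_mem id h
      rw [hPs.2.2] at this
      exact this.trans hA
    · refine ⟨hQs.1 P h, ?_⟩
      have := Finset.subset_biUnion_of_mem id h
      rw [hQs.2.2] at this
      exact this.trans hB
  have hcovM0 : ∀ x, cov M0 x = (if x ∈ A then 1 else 0) + (if x ∈ B then 1 else 0) := by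
    intro x
    rw [hM0, cov_add, cov_partition' hPs.2.1 hPs.2.2, cov_partition' hQs.2.1 hQs.2.2]
  have hcov2 : ∀ x, cov M0 x ≤ 2 := by
    intro x; rw [hcovM0]; split <;> split <;> omega
  obtain ⟨M', hLam', hparts', hcov', hws'⟩ := uncross hw (2 * D.card * D.card + 1) M0 hparts
    hcov2 (by omega)
  have hsplit := laminar_split hwbar hA hB M' hLam' hparts'
    (fun x => (hcov' x).trans (hcovM0 x))
  have hM0sum : wsum w M0 = wbar A + wbar B := by
    rw [hM0, wsum_add, hPsval, hQsval]; rfl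
  rw [Finset.inter_comm, Finset.union_comm] at hsplit ⊢
  -- hsplit : wsum w M' ≤ wbar (B ∪ A) + wbar (B ∩ A)
  linarith [hsplit, hws', hM0sum.symm.le]

lemma max_add_max_le {a b c d e : ℝ} (h1 : a + c ≤ e) (h2 : a + d ≤ e) (h3 : b + c ≤ e)
    (h4 : b + d ≤ e) : max a b + max c d ≤ e := by
  rcases max_cases a b with ⟨h, _⟩ | ⟨h, _⟩ <;> rcases max_cases c d with ⟨h', _⟩ | ⟨h', _⟩ <;>
    rw [h, h'] <;> linarith

lemma le_min_add_min {a b c d e : ℝ} (h1 : e ≤ a + c) (h2 : e ≤ a + d) (h3 : e ≤ b + c)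
    (h4 : e ≤ b + d) : e ≤ min a b + min c d := by
  rcases min_cases a b with ⟨h, _⟩ | ⟨h, _⟩ <;> rcases min_cases c d with ⟨h', _⟩ | ⟨h', _⟩ <;>
    rw [h, h'] <;> linarith

lemma frank : ∀ (V : Finset α) (p b : Finset α → ℝ),
    (∀ A B : Finset α, A ⊆ V → B ⊆ V → p A + p B ≤ p (A ∩ B) + p (A ∪ B)) →
    (∀ A B : Finset α, A ⊆ V → B ⊆ V → b (A ∩ B) + b (A ∪ B) ≤ b A + b B) →
    p ∅ ≤ 0 → 0 ≤ b ∅ → (∀ S ⊆ V, p S ≤ b S) →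
    ∃ x : α → ℝ, ∀ S ⊆ V, p S ≤ ∑ i ∈ S, x i ∧ ∑ i ∈ S, x i ≤ b S := by
  intro V
  induction V using Finset.induction_on with
  | empty =>
    intro p b _ _ hp0 hb0 _
    refine ⟨0, fun S hS => ?_⟩
    rw [Finset.subset_empty.1 hS]
    simpa using ⟨hp0, hb0⟩
  | @insert v V' hv ih =>
    intro p b hsuper hsub hp0 hb0 hpb
    have hins : ∀ S : Finset α, S ⊆ V' → insert v S ⊆ insert v V' := by
      intro S hS
      exact Finset.insert_subset_insert _ hS
    have hsubV : ∀ S : Finset α, S ⊆ V' → S ⊆ insert v V' := by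
      intro S hS
      exact hS.trans (Finset.subset_insert _ _)
    -- the candidate values for α₀
    set cand : Finset ℝ :=
      insert (p {v}) (V'.powerset.image fun S => p (insert v S) - b S) with hcand
    have hcandne : cand.Nonempty := Finset.insert_nonempty _ _
    set a0 : ℝ := cand.max' hcandne with ha0
    have h1 : p {v} ≤ a0 := Finset.le_max' cand (p {v}) (Finset.mem_insert_self _ _)
    have h2 : ∀ S : Finset α, S ⊆ V' → p (insert v S) - b S ≤ a0 := by
      intro S hS
      exact Finset.le_max' cand (p (insert v S) - b S) (Finset.mem_insert_of_mem
        (Finset.mem_image.2 ⟨S, Finset.mem_powerset.2 hS, rfl⟩))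
    have h3 : ∀ T : Finset α, T ⊆ V' → a0 ≤ b (insert v T) - p T := by
      intro T hT
      apply Finset.max'_le
      intro y hy
      rcases Finset.mem_insert.1 hy with hy | hy
      · -- y = p {v}
        subst hy
        have hvT : ({v} : Finset α) ∩ T = ∅ := by
          rw [Finset.singleton_inter_of_notMem (fun h => hv (hT h))]
        have hvT2 : ({v} : Finset α) ∪ T = insert v T := (Finset.insert_eq v T).symm
        have := hsuper {v} T (by simpa using Finset.mem_insert_self v V') (hsubV T hT)
        rw [hvT, hvT2] at this
        have hle := hpb (insert v T) (hins T hT)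
        linarith
      · obtain ⟨S, hS, rfl⟩ := Finset.mem_image.1 hy
        rw [Finset.mem_powerset] at hS
        -- p (insert v S) + p T ≤ b S + b (insert v T)
        have hsup := hsuper (insert v S) T (hins S hS) (hsubV T hT)
        have hiT : insert v S ∩ T = S ∩ T := by
          rw [Finset.insert_inter_of_notMem (fun h => hv (hT h))]
        have hiU : insert v S ∪ T = insert v (S ∪ T) := by
          rw [Finset.insert_union]
        rw [hiT, hiU] at hsup
        have hsb := hsub (insert v T) S (hins T hT) (hsubV S hS)
        have hiT2 : insert v T ∩ S = T ∩ S := by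
          rw [Finset.insert_inter_of_notMem (fun h => hv (hS h))]
        have hiU2 : insert v T ∪ S = insert v (T ∪ S) := by
          rw [Finset.insert_union]
        rw [hiT2, hiU2] at hsb
        have e1 := hpb (insert v (S ∪ T)) (hins _ (Finset.union_subset hS hT))
        have e2 := hpb (S ∩ T) (hsubV _ ((Finset.inter_subset_left).trans hS))
        rw [Finset.inter_comm T S, Finset.union_comm T S] at hsb
        linarith
    have h4 : a0 ≤ b {v} := by
      apply Finset.max'_le
      intro y hy
      rcases Finset.mem_insert.1 hy with hy | hy
      · subst hy
        exact hpb {v} (Finset.singleton_subset_iff.2 (Finset.mem_insert_self v V'))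
      · obtain ⟨S, hS, rfl⟩ := Finset.mem_image.1 hy
        rw [Finset.mem_powerset] at hS
        have hsb := hsub {v} S (Finset.singleton_subset_iff.2 (Finset.mem_insert_self v V'))
          (hsubV S hS)
        have e1 : ({v} : Finset α) ∩ S = ∅ :=
          Finset.singleton_inter_of_notMem (fun h => hv (hS h))
        have e2 : ({v} : Finset α) ∪ S = insert v S := (Finset.insert_eq v S).symm
        rw [e1, e2] at hsb
        have := hpb (insert v S) (hins S hS)
        linarith
    -- recursive data
    set p' : Finset α → ℝ := fun S => max (p S) (p (insert v S) - a0) with hp'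
    set b' : Finset α → ℝ := fun S => min (b S) (b (insert v S) - a0) with hb'
    have hvnotmem : ∀ S : Finset α, S ⊆ V' → v ∉ S := fun S hS h => hv (hS h)
    have hinter : ∀ A B : Finset α, A ⊆ V' → B ⊆ V' →
        insert v A ∩ B = A ∩ B ∧ insert v A ∪ B = insert v (A ∪ B) ∧
        insert v A ∩ insert v B = insert v (A ∩ B) ∧
        insert v A ∪ insert v B = insert v (A ∪ B) := by
      intro A B hA hB
      refine ⟨?_, ?_, ?_, ?_⟩
      · rw [Finset.insert_inter_of_notMem (hvnotmem B hB)]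
      · rw [Finset.insert_union]
      · ext y
        simp only [Finset.mem_inter, Finset.mem_insert]
        tauto
      · ext y
        simp only [Finset.mem_union, Finset.mem_insert]
        tauto
    have hsuper' : ∀ A B : Finset α, A ⊆ V' → B ⊆ V' →
        p' A + p' B ≤ p' (A ∩ B) + p' (A ∪ B) := by
      intro A B hA hB
      obtain ⟨e1, e2, e3, e4⟩ := hinter A B hA hB
      apply max_add_max_le
      · calc p A + p B ≤ p (A ∩ B) + p (A ∪ B) := hsuper A B (hsubV A hA) (hsubV B hB)
          _ ≤ p' (A ∩ B) + p' (A ∪ B) := add_le_add (le_max_left _ _) (le_max_left _ _)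
      · have hsup2 := hsuper (insert v B) A (hins B hB) (hsubV A hA)
        have f1 : insert v B ∩ A = A ∩ B := by
          rw [Finset.insert_inter_of_notMem (hvnotmem A hA), Finset.inter_comm]
        have f2 : insert v B ∪ A = insert v (A ∪ B) := by
          rw [Finset.insert_union, Finset.union_comm]
        rw [f1, f2] at hsup2
        have g1 : p (A ∩ B) ≤ p' (A ∩ B) := le_max_left _ _
        have g2 : p (insert v (A ∪ B)) - a0 ≤ p' (A ∪ B) := le_max_right _ _
        linarith
      · have := hsuper (insert v A) B (hins A hA) (hsubV B hB)
        rw [e1, e2] at this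
        have g1 : p (A ∩ B) ≤ p' (A ∩ B) := le_max_left _ _
        have g2 : p (insert v (A ∪ B)) - a0 ≤ p' (A ∪ B) := le_max_right _ _
        linarith
      · have := hsuper (insert v A) (insert v B) (hins A hA) (hins B hB)
        rw [e3, e4] at this
        have g1 : p (insert v (A ∩ B)) - a0 ≤ p' (A ∩ B) := le_max_right _ _
        have g2 : p (insert v (A ∪ B)) - a0 ≤ p' (A ∪ B) := le_max_right _ _
        linarith
    have hsub' : ∀ A B : Finset α, A ⊆ V' → B ⊆ V' →
        b' (A ∩ B) + b' (A ∪ B) ≤ b' A + b' B := by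
      intro A B hA hB
      obtain ⟨e1, e2, e3, e4⟩ := hinter A B hA hB
      apply le_min_add_min
      · calc b' (A ∩ B) + b' (A ∪ B) ≤ b (A ∩ B) + b (A ∪ B) :=
            add_le_add (min_le_left _ _) (min_le_left _ _)
          _ ≤ b A + b B := hsub A B (hsubV A hA) (hsubV B hB)
      · have hsb2 := hsub (insert v B) A (hins B hB) (hsubV A hA)
        have f1 : insert v B ∩ A = A ∩ B := by
          rw [Finset.insert_inter_of_notMem (hvnotmem A hA), Finset.inter_comm]
        have f2 : insert v B ∪ A = insert v (A ∪ B) := by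
          rw [Finset.insert_union, Finset.union_comm]
        rw [f1, f2] at hsb2
        have g1 : b' (A ∩ B) ≤ b (A ∩ B) := min_le_left _ _
        have g2 : b' (A ∪ B) ≤ b (insert v (A ∪ B)) - a0 := min_le_right _ _
        linarith
      · have := hsub (insert v A) B (hins A hA) (hsubV B hB)
        rw [e1, e2] at this
        have g1 : b' (A ∩ B) ≤ b (A ∩ B) := min_le_left _ _
        have g2 : b' (A ∪ B) ≤ b (insert v (A ∪ B)) - a0 := min_le_right _ _
        linarith
      · have := hsub (insert v A) (insert v B) (hins A hA) (hins B hB)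
        rw [e3, e4] at this
        have g1 : b' (A ∩ B) ≤ b (insert v (A ∩ B)) - a0 := min_le_right _ _
        have g2 : b' (A ∪ B) ≤ b (insert v (A ∪ B)) - a0 := min_le_right _ _
        linarith
    have hp0' : p' ∅ ≤ 0 := by
      apply max_le hp0
      have h5 : (insert v ∅ : Finset α) = {v} := rfl
      rw [h5]
      linarith
    have hb0' : 0 ≤ b' ∅ := by
      apply le_min hb0
      have h5 : (insert v ∅ : Finset α) = {v} := rfl
      rw [h5]
      linarith
    have hpb' : ∀ S ⊆ V', p' S ≤ b' S := by
      intro S hS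
      apply max_le <;> apply le_min
      · exact hpb S (hsubV S hS)
      · linarith [h3 S hS]
      · linarith [h2 S hS]
      · linarith [hpb (insert v S) (hins S hS)]
    obtain ⟨x', hx'⟩ := ih p' b' hsuper' hsub' hp0' hb0' hpb'
    refine ⟨Function.update x' v a0, ?_⟩
    intro S hS
    by_cases hvS : v ∈ S
    · set T : Finset α := S.erase v with hTdef
      have hTV : T ⊆ V' := by
        intro y hy
        have hy' := Finset.mem_of_mem_erase hy
        have := hS hy'
        rcases Finset.mem_insert.1 this with h | h
        · exact absurd h (Finset.ne_of_mem_erase hy)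
        · exact h
      have hSins : S = insert v T := by
        rw [hTdef, Finset.insert_erase hvS]
      have hsum : ∑ i ∈ S, Function.update x' v a0 i = a0 + ∑ i ∈ T, x' i := by
        rw [hSins, Finset.sum_insert (Finset.notMem_erase _ _)]
        congr 1
        · exact Function.update_self _ _ _
        · apply Finset.sum_congr rfl
          intro i hi
          exact Function.update_of_ne (fun h => hv (hTV (by rwa [h] at hi))) _ _
      obtain ⟨hl, hr⟩ := hx' T hTV
      constructor
      · rw [hsum, hSins]
        have : p (insert v T) - a0 ≤ p' T := le_max_right _ _
        linarith
      · rw [hsum, hSins]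
        have : b' T ≤ b (insert v T) - a0 := min_le_right _ _
        linarith
    · have hSV' : S ⊆ V' := by
        intro y hy
        rcases Finset.mem_insert.1 (hS hy) with h | h
        · exact absurd (h ▸ hy) hvS
        · exact h
      have hsum : ∑ i ∈ S, Function.update x' v a0 i = ∑ i ∈ S, x' i := by
        apply Finset.sum_congr rfl
        intro i hi
        exact Function.update_of_ne (fun h => hvS (by rwa [h] at hi)) _ _
      obtain ⟨hl, hr⟩ := hx' S hSV'
      constructor
      · rw [hsum]
        exact le_trans (le_max_left _ _) hl
      · rw [hsum]
        exact le_trans hr (min_le_left _ _)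

lemma single_le_cover {v vbar : Finset α → ℝ} {D S : Finset α}
    (hvbar : IsSupaddCoverOn v vbar D) (hS : S ⊆ D) (hne : S.Nonempty) : v S ≤ vbar S := by
  have hpp : IsProperPartition {S} S := by
    refine ⟨?_, ?_, by simp⟩
    · intro P hP
      rw [Finset.mem_singleton.1 hP]
      exact hne
    · intro P hP Q hQ hne'
      rw [Finset.mem_singleton] at hP hQ
      exact absurd (hP.trans hQ.symm) hne'
  have := (hvbar.2 S hS hne).2 {S} hpp
  simpa using this

lemma partition_sum {Ps : Finset (Finset α)} {S : Finset α} (h : IsProperPartition Ps S)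
    (x : α → ℝ) : ∑ P ∈ Ps, ∑ i ∈ P, x i = ∑ i ∈ S, x i := by
  rw [← h.2.2]
  exact (Finset.sum_biUnion (fun P hP Q hQ hne =>
    h.2.1 P (Finset.mem_coe.1 hP) Q (Finset.mem_coe.1 hQ) hne)).symm

end CoreAux

open CoreAux

theorem core_nonempty_iff_covers_nonpositive {α : Type*} [Fintype α] [DecidableEq α]
    (w u wbar ubar : Finset α → ℝ) (s : α) (h0 : w ∅ = 0)
    (hcross : ∀ S T : Finset α, (S ∩ T).Nonempty → S ∪ T ≠ Finset.univ →
      w S + w T ≤ w (S ∩ T) + w (S ∪ T))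
    (hu : ∀ S : Finset α, S ⊆ ({s} : Finset α)ᶜ → u S = w (Finset.univ \ S) - w Finset.univ)
    (hwbar : IsSupaddCoverOn w wbar ({s} : Finset α)ᶜ)
    (hubar : IsSupaddCoverOn u ubar ({s} : Finset α)ᶜ) :
    (∃ x : α → ℝ, (∀ S : Finset α, w S ≤ ∑ i ∈ S, x i) ∧ ∑ i, x i = w Finset.univ)
      ↔ (∀ S : Finset α, S ⊆ ({s} : Finset α)ᶜ → 0 ≤ -wbar S - ubar S) := by
  classical
  set D : Finset α := ({s} : Finset α)ᶜ with hD
  have hsD : s ∉ D := by simp [hD]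
  have hmemD : ∀ {P : Finset α}, P ⊆ D → s ∉ P := fun hP h => hsD (hP h)
  have hDuniv : ∀ {P Q : Finset α}, P ⊆ D → Q ⊆ D → P ∪ Q ≠ Finset.univ := by
    intro P Q hP hQ h
    have : s ∈ P ∪ Q := h ▸ Finset.mem_univ s
    rcases Finset.mem_union.1 this with h' | h'
    · exact hmemD hP h'
    · exact hmemD hQ h'
  have hwD : ∀ P Q : Finset α, P ⊆ D → Q ⊆ D → (P ∩ Q).Nonempty →
      w P + w Q ≤ w (P ∩ Q) + w (P ∪ Q) :=
    fun P Q hP hQ hne => hcross P Q hne (hDuniv hP hQ)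
  have hsdiffD : ∀ {P : Finset α}, Finset.univ \ P ⊆ D ↔ s ∈ P := by
    intro P
    constructor
    · intro h
      by_contra hs
      exact hmemD h (Finset.mem_sdiff.2 ⟨Finset.mem_univ s, hs⟩)
    · intro h x hx
      rw [hD, Finset.mem_compl, Finset.mem_singleton]
      intro he
      exact (Finset.mem_sdiff.1 hx).2 (he ▸ h)
  have huD : ∀ P Q : Finset α, P ⊆ D → Q ⊆ D → (P ∩ Q).Nonempty →
      u P + u Q ≤ u (P ∩ Q) + u (P ∪ Q) := by
    intro P Q hP hQ hne
    have hc := hcross (Finset.univ \ P) (Finset.univ \ Q) ?_ ?_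
    · have e1 : (Finset.univ \ P) ∩ (Finset.univ \ Q) = Finset.univ \ (P ∪ Q) := by
        ext y; simp only [Finset.mem_inter, Finset.mem_sdiff, Finset.mem_univ, true_and,
          Finset.mem_union]; tauto
      have e2 : (Finset.univ \ P) ∪ (Finset.univ \ Q) = Finset.univ \ (P ∩ Q) := by
        ext y; simp only [Finset.mem_union, Finset.mem_sdiff, Finset.mem_univ, true_and,
          Finset.mem_inter]; tauto
      rw [e1, e2] at hc
      rw [hu P hP, hu Q hQ, hu (P ∩ Q) ((Finset.inter_subset_left).trans hP),
        hu (P ∪ Q) (Finset.union_subset hP hQ)]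
      linarith
    · refine ⟨s, ?_⟩
      simp only [Finset.mem_inter, Finset.mem_sdiff, Finset.mem_univ, true_and]
      exact ⟨hmemD hP, hmemD hQ⟩
    · intro h
      obtain ⟨y, hy⟩ := hne
      have : y ∈ (Finset.univ \ P) ∪ (Finset.univ \ Q) := by
        rw [h]; exact Finset.mem_univ y
      rw [Finset.mem_inter] at hy
      rcases Finset.mem_union.1 this with h' | h'
      · exact (Finset.mem_sdiff.1 h').2 hy.1
      · exact (Finset.mem_sdiff.1 h').2 hy.2
  constructor
  · -- forward: core element gives nonpositive covers
    rintro ⟨x, hx1, hx2⟩ S hS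
    rcases Finset.eq_empty_or_nonempty S with rfl | hSne
    · rw [hwbar.1, hubar.1]
      norm_num
    obtain ⟨⟨Ps, hPs, hPsval⟩, _⟩ := hwbar.2 S hS hSne
    obtain ⟨⟨Qs, hQs, hQsval⟩, _⟩ := hubar.2 S hS hSne
    have hwb : wbar S ≤ ∑ i ∈ S, x i := by
      rw [hPsval, ← partition_sum hPs x]
      exact Finset.sum_le_sum (fun P _ => hx1 P)
    have hub : ubar S ≤ -∑ i ∈ S, x i := by
      rw [hQsval, ← partition_sum hQs x, ← Finset.sum_neg_distrib]
      apply Finset.sum_le_sum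
      intro Q hQ
      have hQD : Q ⊆ D := by
        have := Finset.subset_biUnion_of_mem id hQ
        rw [hQs.2.2] at this
        exact this.trans hS
      rw [hu Q hQD]
      have hsd : ∑ i ∈ Finset.univ \ Q, x i + ∑ i ∈ Q, x i = ∑ i, x i :=
        Finset.sum_sdiff (Finset.subset_univ Q)
      have := hx1 (Finset.univ \ Q)
      linarith
    linarith
  · -- backward: construct core element
    intro hcond
    have hpsuper := cover_supermodular hwD hwbar
    have husuper := cover_supermodular huD hubar
    obtain ⟨x', hx'⟩ := frank D wbar (fun S => -(ubar S))
      (fun A B hA hB => hpsuper A B hA hB)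
      (fun A B hA hB => by have := husuper A B hA hB; linarith)
      (le_of_eq hwbar.1) (by show (0:ℝ) ≤ -(ubar ∅); rw [hubar.1]; norm_num)
      (fun S hS => by have := hcond S hS; show wbar S ≤ -(ubar S); linarith)
    set x : α → ℝ := Function.update x' s (w Finset.univ - ∑ i ∈ D, x' i) with hx
    have hagree : ∀ {S : Finset α}, S ⊆ D → ∑ i ∈ S, x i = ∑ i ∈ S, x' i := by
      intro S hS
      apply Finset.sum_congr rfl
      intro i hi
      exact Function.update_of_ne (fun h => hmemD hS (by rwa [h] at hi)) _ _
    have hDs : Finset.univ \ ({s} : Finset α) = D := by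
      rw [hD, Finset.compl_eq_univ_sdiff]
    have hxuniv : ∑ i, x i = w Finset.univ := by
      have hsplit : ∑ i ∈ Finset.univ \ ({s} : Finset α), x i + ∑ i ∈ ({s} : Finset α), x i
          = ∑ i, x i := Finset.sum_sdiff (Finset.subset_univ _)
      rw [hDs] at hsplit
      rw [← hsplit, hagree (le_refl D), Finset.sum_singleton]
      rw [hx, Function.update_self]
      ring
    refine ⟨x, ?_, hxuniv⟩
    intro S
    by_cases hsS : s ∈ S
    · -- use the u side
      set T : Finset α := Finset.univ \ S with hT
      have hTD : T ⊆ D := hsdiffD.2 hsS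
      have hcompl : Finset.univ \ T = S := by
        rw [hT, Finset.sdiff_sdiff_eq_self (Finset.subset_univ S)]
      have hsplit : ∑ i ∈ T, x i + ∑ i ∈ S, x i = ∑ i, x i := by
        rw [hT]
        exact Finset.sum_sdiff (Finset.subset_univ S)
      rcases Finset.eq_empty_or_nonempty T with hTe | hTne
      · have : S = Finset.univ := by
          rw [← hcompl, hTe, Finset.sdiff_empty]
        rw [this, hxuniv]
      · have hb : ∑ i ∈ T, x' i ≤ -(ubar T) := (hx' T hTD).2
        have hub : u T ≤ ubar T := single_le_cover hubar hTD hTne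
        have huT : u T = w S - w Finset.univ := by
          rw [hu T hTD, hcompl]
        rw [hagree hTD] at hsplit
        rw [hxuniv] at hsplit
        linarith
    · have hSD : S ⊆ D := by
        intro y hy
        rw [hD, Finset.mem_compl, Finset.mem_singleton]
        intro he
        exact hsS (by rwa [he] at hy)
      rcases Finset.eq_empty_or_nonempty S with rfl | hSne
      · simp [h0]
      · have := (hx' S hSD).1
        have hwb : w S ≤ wbar S := single_le_cover hwbar hSD hSne
        rw [hagree hSD]
        linarith
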